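/- For integers r ≥ 1 and 0 ≤ d ≤ r−1, the maximum over all triples (r_1, r_2, r_3) of nonnegative integers with r_1 + r_2 + r_3 = r of the quantity C(r+1, d+2) + C(r, d+2) − C(r_1+r_2, d+2) − C(r_1+r_3, d+2) − C(r_2+r_3+1, d+2) equals C(r+1, d+2) + C(r, d+2) − C(⌊(2r+1)/3⌋, d+2) − C([(2r+1)/3], d+2) − C(⌈(2r+1)/3⌉, d+2), where [x] denotes the nearest integer to x. -/
import Mathlib

/-- Smoothing: moving one unit from the larger to the smaller does not increase the sum. -/
lemma smooth9 (d a b : ℕ) (h : b + 2 ≤ a) :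
    (a - 1).choose (d + 2) + (b + 1).choose (d + 2) ≤ a.choose (d + 2) + b.choose (d + 2) := by
  obtain ⟨a', rfl⟩ : ∃ a', a = a' + 1 := ⟨a - 1, by omega⟩
  simp only [Nat.add_sub_cancel]
  have h1 : (a' + 1).choose (d + 2) = a'.choose (d + 1) + a'.choose (d + 2) :=
    Nat.choose_succ_succ a' (d + 1)
  have h2 : (b + 1).choose (d + 2) = b.choose (d + 1) + b.choose (d + 2) :=
    Nat.choose_succ_succ b (d + 1)
  have h3 : b.choose (d + 1) ≤ a'.choose (d + 1) :=
    Nat.choose_le_choose _ (by omega)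
  omega

/-- The balanced decomposition minimizes the sum of binomials. -/
lemma min9 (d N : ℕ) (m : ℕ) : ∀ a b c : ℕ, a * a + b * b + c * c = m → a + b + c = N →
    (N / 3).choose (d + 2) + ((N + 1) / 3).choose (d + 2) + ((N + 2) / 3).choose (d + 2) ≤
      a.choose (d + 2) + b.choose (d + 2) + c.choose (d + 2) := by
  induction m using Nat.strong_induction_on with
  | _ m ih =>
    have key : ∀ a b c : ℕ, a ≤ b → b ≤ c → a * a + b * b + c * c = m → a + b + c = N →
        (N / 3).choose (d + 2) + ((N + 1) / 3).choose (d + 2) + ((N + 2) / 3).choose (d + 2) ≤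
          a.choose (d + 2) + b.choose (d + 2) + c.choose (d + 2) := by
      intro a b c hab hbc hm hN
      by_cases h : a + 2 ≤ c
      · obtain ⟨c', rfl⟩ : ∃ c', c = c' + 1 := ⟨c - 1, by omega⟩
        have hlt : (a + 1) * (a + 1) + b * b + c' * c' < m := by nlinarith
        have h1 := ih _ hlt (a + 1) b c' rfl (by omega)
        have h2 := smooth9 d (c' + 1) a h
        simp only [Nat.add_sub_cancel] at h2
        omega
      · obtain ⟨ha, hb, hc⟩ : a = N / 3 ∧ b = (N + 1) / 3 ∧ c = (N + 2) / 3 := by omega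
        subst ha hb hc
        exact le_refl _
    intro a b c hm hN
    rcases le_total a b with h1 | h1 <;> rcases le_total b c with h2 | h2 <;>
      rcases le_total a c with h3 | h3
    · exact key a b c h1 h2 hm hN
    · exact key a b c h1 h2 hm hN
    · have := key a c b h3 (by omega) (by linarith) (by omega); omega
    · have := key c a b h3 h1 (by linarith) (by omega); omega
    · have := key b a c h1 h3 (by linarith) (by omega); omega
    · have := key b c a h2 h3 (by linarith) (by omega); omega
    · have := key c b a h2 h1 (by linarith) (by omega); omega
    · have := key c b a h2 h1 (by linarith) (by omega); omega

/-- Computing the round. -/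
lemma round9 (r : ℕ) : (round ((2 * (r : ℚ) + 1) / 3)).toNat = (2 * r + 2) / 3 := by
  obtain ⟨k, hk | hk | hk⟩ : ∃ k, r = 3 * k ∨ r = 3 * k + 1 ∨ r = 3 * k + 2 := ⟨r / 3, by omega⟩
  · have h : round ((2 * (r : ℚ) + 1) / 3) = 2 * k := by
      rw [round_eq]
      have e : (2 * (r : ℚ) + 1) / 3 + 1 / 2 = 2 * k + 5 / 6 := by rw [hk]; push_cast; ring
      rw [e, Int.floor_eq_iff] <;> push_cast <;> norm_num
    rw [h]; omega
  · have h : round ((2 * (r : ℚ) + 1) / 3) = 2 * k + 1 := by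
      rw [round_eq]
      have e : (2 * (r : ℚ) + 1) / 3 + 1 / 2 = (2 * k + 1) + 1 / 2 := by rw [hk]; push_cast; ring
      rw [e, Int.floor_eq_iff] <;> push_cast <;> norm_num
    rw [h]; omega
  · have h : round ((2 * (r : ℚ) + 1) / 3) = 2 * k + 2 := by
      rw [round_eq]
      have e : (2 * (r : ℚ) + 1) / 3 + 1 / 2 = (2 * k + 2) + 1 / 6 := by rw [hk]; push_cast; ring
      rw [e, Int.floor_eq_iff] <;> push_cast <;> norm_num
    rw [h]; omega

/-- For `r ≥ 1` and `0 ≤ d ≤ r-1`, the maximum over nonnegative `r₁+r₂+r₃ = r` of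
`C(r+1,d+2) + C(r,d+2) − C(r₁+r₂,d+2) − C(r₁+r₃,d+2) − C(r₂+r₃+1,d+2)` equals the value
obtained from the balanced decomposition `⌊(2r+1)/3⌋, [(2r+1)/3], ⌈(2r+1)/3⌉` of `2r+1`,
where `[x]` is the nearest integer to `x`. -/
theorem stmt9 (r d : ℕ) (hr : 1 ≤ r) (hd : d ≤ r - 1) :
    IsGreatest
      {n : ℤ | ∃ r1 r2 r3 : ℕ, r1 + r2 + r3 = r ∧
        n = ((r + 1).choose (d + 2) : ℤ) + (r.choose (d + 2) : ℤ) -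
          ((r1 + r2).choose (d + 2) : ℤ) - ((r1 + r3).choose (d + 2) : ℤ) -
          ((r2 + r3 + 1).choose (d + 2) : ℤ)}
      (((r + 1).choose (d + 2) : ℤ) + (r.choose (d + 2) : ℤ) -
        (((2 * r + 1) / 3).choose (d + 2) : ℤ) -
        (((round ((2 * (r : ℚ) + 1) / 3)).toNat.choose (d + 2) : ℤ)) -
        ((((2 * r + 1 + 2) / 3).choose (d + 2) : ℤ))) := by
  constructor
  · obtain ⟨k, hk | hk | hk⟩ : ∃ k, r = 3 * k ∨ r = 3 * k + 1 ∨ r = 3 * k + 2 := ⟨r / 3, by omega⟩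
    · refine ⟨k, k, k, by omega, ?_⟩
      rw [round9, show (2 * r + 1) / 3 = k + k from by omega,
        show (2 * r + 2) / 3 = k + k from by omega,
        show (2 * r + 1 + 2) / 3 = k + k + 1 from by omega]
    · refine ⟨k + 1, k, k, by omega, ?_⟩
      rw [round9, show (2 * r + 1) / 3 = k + 1 + k from by omega,
        show (2 * r + 2) / 3 = k + 1 + k from by omega,
        show (2 * r + 1 + 2) / 3 = k + k + 1 from by omega]
    · refine ⟨k + 1, k, k + 1, by omega, ?_⟩
      rw [round9, show (2 * r + 1) / 3 = k + 1 + k from by omega,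
        show (2 * r + 2) / 3 = k + 1 + (k + 1) from by omega,
        show (2 * r + 1 + 2) / 3 = k + (k + 1) + 1 from by omega]
  · rintro n ⟨r1, r2, r3, hs, rfl⟩
    rw [round9]
    have h := min9 d (2 * r + 1) _ (r1 + r2) (r1 + r3) (r2 + r3 + 1) rfl (by omega)
    rw [show (2 * r + 1 + 1) / 3 = (2 * r + 2) / 3 from by omega] at h
    have h' : ((((2 * r + 1) / 3).choose (d + 2) : ℤ) + (((2 * r + 2) / 3).choose (d + 2) : ℤ) +
        (((2 * r + 1 + 2) / 3).choose (d + 2) : ℤ)) ≤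
        (((r1 + r2).choose (d + 2) : ℤ) + ((r1 + r3).choose (d + 2) : ℤ) +
        ((r2 + r3 + 1).choose (d + 2) : ℤ)) := by exact_mod_cast h
    linarith
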